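/- Let p be a prime and let G = C_{p^{n_1}} × ⋯ × C_{p^{n_r}} be a finite abelian p-group, where the i-th factor is cyclic of order p^{n_i} with generator g_i (n_i ≥ 1). Let G̃ = ∑_{g ∈ G} g and let (G̃) be the ideal of F_p[G] generated by G̃. Then the tensor product (G̃) ⊗_{F_p[G]} Ω_{F_p[G]/F_p} is an F_p-vector space of dimension r, with basis given by the r elements G̃ ⊗ dg_i for 1 ≤ i ≤ r. -/

import Mathlib

open TensorProduct

/-- The finite abelian `p`-group `G = C_{p^{n_1}} × ⋯ × C_{p^{n_r}}`. -/
abbrev PGroup (p r : ℕ) (n : Fin r → ℕ) : Type :=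
  (i : Fin r) → Multiplicative (ZMod (p ^ n i))

/-- The generator `g_i` of the `i`-th cyclic factor of `G`. -/
noncomputable def pGen (p r : ℕ) (n : Fin r → ℕ) (i : Fin r) : PGroup p r n :=
  Pi.mulSingle i (Multiplicative.ofAdd 1)

/-- The sum `G̃ = ∑_{g ∈ G} g` of all group elements in the group algebra `F_p[G]`. -/
noncomputable def gTilde (p : ℕ) [Fact p.Prime] (r : ℕ) (n : Fin r → ℕ) :
    MonoidAlgebra (ZMod p) (PGroup p r n) :=
  ∑ g : PGroup p r n, MonoidAlgebra.of (ZMod p) (PGroup p r n) g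

section aux
variable (p : ℕ) [Fact p.Prime] (r : ℕ) (n : Fin r → ℕ) (hn : ∀ i, 1 ≤ n i)

noncomputable def myf (i : Fin r) (g : PGroup p r n) : ZMod p :=
  ZMod.castHom (dvd_pow_self p (Nat.one_le_iff_ne_zero.mp (hn i))) (ZMod p)
    (Multiplicative.toAdd (g i))

variable {p r n}

lemma myf_mul (i : Fin r) (g h : PGroup p r n) :
    myf p r n hn i (g * h) = myf p r n hn i g + myf p r n hn i h := by
  simp [myf, toAdd_mul, map_add]

lemma myf_one (i : Fin r) : myf p r n hn i 1 = 0 := by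
  simp [myf]

lemma myf_pGen (i j : Fin r) :
    myf p r n hn i (pGen p r n j) = if i = j then 1 else 0 := by
  rcases eq_or_ne i j with rfl | hij
  · simp only [myf, pGen, Pi.mulSingle_eq_same, toAdd_ofAdd, map_one, if_pos rfl, if_true]
  · simp only [myf, pGen, Pi.mulSingle_eq_of_ne hij, toAdd_one, map_zero, if_neg hij]


noncomputable def dl (i : Fin r) :
    MonoidAlgebra (ZMod p) (PGroup p r n) →ₗ[ZMod p] MonoidAlgebra (ZMod p) (PGroup p r n) :=
  (Finsupp.lsum (ZMod p) fun g => myf p r n hn i g • MonoidAlgebra.lsingle (R := ZMod p) g) ∘ₗ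
    (MonoidAlgebra.coeffLinearEquiv (ZMod p)).toLinearMap

lemma dl_single (i : Fin r) (g : PGroup p r n) (c : ZMod p) :
    dl hn i (MonoidAlgebra.single g c) = myf p r n hn i g • MonoidAlgebra.single g c := by
  rw [dl, LinearMap.comp_apply]
  change (Finsupp.lsum (ZMod p) _) (Finsupp.single g c) = _
  rw [Finsupp.lsum_single]
  rfl

lemma dl_mul (i : Fin r) (a b : MonoidAlgebra (ZMod p) (PGroup p r n)) :
    dl hn i (a * b) = a * dl hn i b + b * dl hn i a := by
  induction a using MonoidAlgebra.induction_linear with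
  | zero => simp
  | add f g hf hg =>
      rw [add_mul, map_add, hf, hg, map_add]
      ring
  | single g c =>
      induction b using MonoidAlgebra.induction_linear with
      | zero => simp
      | add f g' hf hg' =>
          rw [mul_add, map_add, hf, hg', map_add]
          ring
      | single h d =>
          rw [MonoidAlgebra.single_mul_single, dl_single, dl_single, dl_single, myf_mul]
          rw [mul_smul_comm, mul_smul_comm, MonoidAlgebra.single_mul_single,
            MonoidAlgebra.single_mul_single, add_smul, mul_comm h g, mul_comm d c, add_comm]

noncomputable def myD :
    Derivation (ZMod p) (MonoidAlgebra (ZMod p) (PGroup p r n))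
      (Fin r → MonoidAlgebra (ZMod p) (PGroup p r n)) where
  toLinearMap := LinearMap.pi fun i => dl hn i
  map_one_eq_zero' := by
    funext i
    simp [LinearMap.pi_apply, MonoidAlgebra.one_def, dl_single, myf_one]
  leibniz' := by
    intro a b
    funext i
    simp only [LinearMap.pi_apply, dl_mul, Pi.add_apply, Pi.smul_apply, smul_eq_mul]

lemma myD_apply (a : MonoidAlgebra (ZMod p) (PGroup p r n)) (i : Fin r) :
    myD hn a i = dl hn i a := rfl


lemma pGroup_eq_prod (g : PGroup p r n) :
    g = ∏ i, pGen p r n i ^ (Multiplicative.toAdd (g i)).val := by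
  have : ∀ i : Fin r, pGen p r n i ^ (Multiplicative.toAdd (g i)).val
      = Pi.mulSingle i (g i) := by
    intro i
    haveI : NeZero (p ^ n i) := ⟨pow_ne_zero _ (Fact.out (p := p.Prime)).ne_zero⟩
    rw [pGen, ← Pi.mulSingle_pow]
    rw [← ofAdd_nsmul, nsmul_eq_mul, mul_one, ZMod.natCast_val, ZMod.cast_id,
      ofAdd_toAdd]
  simp only [this, Finset.univ_prod_mulSingle]

lemma of_mul_gTilde (g : PGroup p r n) :
    MonoidAlgebra.of (ZMod p) (PGroup p r n) g * gTilde p r n = gTilde p r n := by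
  rw [gTilde, Finset.mul_sum]
  simp only [← map_mul]
  exact Fintype.sum_equiv (Equiv.mulLeft g) _ _ fun h => rfl

noncomputable def eps : MonoidAlgebra (ZMod p) (PGroup p r n) →ₗ[ZMod p] ZMod p :=
  (Finsupp.lsum (ZMod p) fun _ => LinearMap.id) ∘ₗ
    (MonoidAlgebra.coeffLinearEquiv (ZMod p)).toLinearMap

lemma eps_single (g : PGroup p r n) (c : ZMod p) :
    eps (MonoidAlgebra.single g c) = c := by
  rw [eps, LinearMap.comp_apply]
  change (Finsupp.lsum (ZMod p) _) (Finsupp.single g c) = _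
  rw [Finsupp.lsum_single]
  rfl

lemma single_eq_smul_of (g : PGroup p r n) (c : ZMod p) :
    MonoidAlgebra.single g c = c • MonoidAlgebra.of (ZMod p) (PGroup p r n) g := by
  rw [MonoidAlgebra.of_apply, MonoidAlgebra.smul_single', mul_one]

lemma mul_gTilde (a : MonoidAlgebra (ZMod p) (PGroup p r n)) :
    a * gTilde p r n = eps a • gTilde p r n := by
  induction a using MonoidAlgebra.induction_linear with
  | zero => simp
  | add f g hf hg => rw [add_mul, hf, hg, map_add, add_smul]
  | single g c =>
      rw [eps_single, single_eq_smul_of,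
        smul_mul_assoc, of_mul_gTilde]

lemma lapply_one_gTilde :
    Finsupp.lapply (M := ZMod p) (R := ZMod p) (1 : PGroup p r n) (gTilde p r n).coeff = (1 : ZMod p) := by
  rw [gTilde, MonoidAlgebra.coeff_sum, map_sum]
  simp only [Finsupp.lapply_apply, MonoidAlgebra.of_apply, MonoidAlgebra.coeff_single]
  rw [Finset.sum_eq_single (1 : PGroup p r n)]
  · erw [Finsupp.single_eq_same]
  · intro b _ hb
    exact Finsupp.single_eq_of_ne (by exact fun h => hb h.symm)
  · intro h
    exact absurd (Finset.mem_univ _) h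

end aux

section main
variable (p : ℕ) [Fact p.Prime] (r : ℕ) (n : Fin r → ℕ) (hn : ∀ i, 1 ≤ n i)

local notation "A" => MonoidAlgebra (ZMod p) (PGroup p r n)

noncomputable def coeffOne : MonoidAlgebra (ZMod p) (PGroup p r n) →ₗ[ZMod p] ZMod p :=
  Finsupp.lapply (M := ZMod p) (R := ZMod p) (1 : PGroup p r n) ∘ₗ
    (MonoidAlgebra.coeffLinearEquiv (ZMod p)).toLinearMap

lemma coeffOne_gTilde : coeffOne p r n (gTilde p r n) = 1 := lapply_one_gTilde

set_option maxHeartbeats 2000000 in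
set_option synthInstance.maxHeartbeats 400000 in
theorem gTilde_tensor_kaehler_basis' (hn : ∀ i, 1 ≤ n i) :
    ∃ b : Module.Basis (Fin r) (ZMod p)
        ((Ideal.span {gTilde p r n} : Ideal (MonoidAlgebra (ZMod p) (PGroup p r n)))
          ⊗[MonoidAlgebra (ZMod p) (PGroup p r n)]
            (Ω[MonoidAlgebra (ZMod p) (PGroup p r n)⁄ZMod p])),
      ∀ i : Fin r,
        b i = (⟨gTilde p r n, Ideal.subset_span rfl⟩ :
            (Ideal.span {gTilde p r n} : Ideal (MonoidAlgebra (ZMod p) (PGroup p r n)))) ⊗ₜ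
          KaehlerDifferential.D (ZMod p) (MonoidAlgebra (ZMod p) (PGroup p r n))
            (MonoidAlgebra.of (ZMod p) (PGroup p r n) (pGen p r n i)) := by
  classical
  set I : Ideal A := Ideal.span {gTilde p r n} with hI
  set gt : I := ⟨gTilde p r n, Ideal.subset_span rfl⟩ with hgt
  set D := KaehlerDifferential.D (ZMod p) A with hD
  set L : (Ω[A⁄ZMod p]) →ₗ[A] (Fin r → A) := (myD hn).liftKaehlerDifferential with hL
  set T : (I ⊗[A] (Ω[A⁄ZMod p])) →ₗ[A] (Fin r → A) :=
    TensorProduct.lift ((LinearMap.toSpanSingleton A _ L).comp I.subtype) with hT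
  set Φ : (I ⊗[A] (Ω[A⁄ZMod p])) →ₗ[ZMod p] (Fin r → ZMod p) :=
    (LinearMap.pi fun i => (coeffOne p r n).comp (LinearMap.proj i)).comp
      (T.restrictScalars (ZMod p)) with hΦ
  set v : Fin r → (I ⊗[A] (Ω[A⁄ZMod p])) :=
    fun i => gt ⊗ₜ D (MonoidAlgebra.of (ZMod p) (PGroup p r n) (pGen p r n i)) with hv
  set Ψ : (Fin r → ZMod p) →ₗ[ZMod p] (I ⊗[A] (Ω[A⁄ZMod p])) :=
    (Pi.basisFun (ZMod p) (Fin r)).constr (ZMod p) v with hΨ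
  have hTtmul : ∀ (x : I) (ω : Ω[A⁄ZMod p]), T (x ⊗ₜ ω) = (x : A) • L ω := by
    intro x ω; rfl
  have hΦv : ∀ j, Φ (v j) = Pi.single j 1 := by
    intro j
    funext i
    simp only [hΦ, hv, LinearMap.comp_apply, LinearMap.restrictScalars_apply, hTtmul,
      LinearMap.pi_apply, LinearMap.proj_apply]
    rw [hL, Derivation.liftKaehlerDifferential_comp_D]
    have : (myD hn (MonoidAlgebra.of (ZMod p) (PGroup p r n) (pGen p r n j))) i
        = myf p r n hn i (pGen p r n j) • MonoidAlgebra.of (ZMod p) (PGroup p r n) (pGen p r n j) := by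
      rw [myD_apply, MonoidAlgebra.of_apply, dl_single]
    rw [Pi.smul_apply, this, smul_eq_mul, mul_smul_comm,
      mul_comm (gTilde p r n) (MonoidAlgebra.of (ZMod p) (PGroup p r n) (pGen p r n j)),
      of_mul_gTilde, map_smul, coeffOne_gTilde, smul_eq_mul, mul_one, myf_pGen,
      Pi.single_apply]
  have hΨsingle : ∀ j, Ψ (Pi.single j 1) = v j := by
    intro j
    rw [← Pi.basisFun_apply, hΨ]
    exact Module.Basis.constr_basis _ _ _ _
  have hgen : ∀ g : PGroup p r n,
      (gt ⊗ₜ[A] D (MonoidAlgebra.of (ZMod p) (PGroup p r n) g) : I ⊗[A] (Ω[A⁄ZMod p]))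
        ∈ Submodule.span (ZMod p) (Set.range v) := by
    have h1 : (gt ⊗ₜ[A] D (MonoidAlgebra.of (ZMod p) (PGroup p r n) (1 : PGroup p r n))
          : I ⊗[A] (Ω[A⁄ZMod p])) ∈ Submodule.span (ZMod p) (Set.range v) := by
      rw [map_one, hD, (KaehlerDifferential.D (ZMod p) A).map_one_eq_zero,
        TensorProduct.tmul_zero]
      exact Submodule.zero_mem _
    have hmul : ∀ g h : PGroup p r n,
        (gt ⊗ₜ[A] D (MonoidAlgebra.of (ZMod p) (PGroup p r n) g) : I ⊗[A] (Ω[A⁄ZMod p]))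
          ∈ Submodule.span (ZMod p) (Set.range v) →
        (gt ⊗ₜ[A] D (MonoidAlgebra.of (ZMod p) (PGroup p r n) h) : I ⊗[A] (Ω[A⁄ZMod p]))
          ∈ Submodule.span (ZMod p) (Set.range v) →
        (gt ⊗ₜ[A] D (MonoidAlgebra.of (ZMod p) (PGroup p r n) (g * h)) : I ⊗[A] (Ω[A⁄ZMod p]))
          ∈ Submodule.span (ZMod p) (Set.range v) := by
      intro g h hg hh
      have hsm : ∀ g' h' : PGroup p r n,
          (gt ⊗ₜ[A] ((MonoidAlgebra.of (ZMod p) (PGroup p r n) g') •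
              D (MonoidAlgebra.of (ZMod p) (PGroup p r n) h')) : I ⊗[A] (Ω[A⁄ZMod p]))
            = gt ⊗ₜ[A] D (MonoidAlgebra.of (ZMod p) (PGroup p r n) h') := by
        intro g' h'
        rw [← TensorProduct.smul_tmul]
        congr 1
        exact Subtype.ext (of_mul_gTilde g')
      rw [map_mul, hD, Derivation.leibniz, TensorProduct.tmul_add, ← hD, hsm, hsm]
      exact Submodule.add_mem _ hh hg
    have hpow : ∀ (g : PGroup p r n) (k : ℕ),
        (gt ⊗ₜ[A] D (MonoidAlgebra.of (ZMod p) (PGroup p r n) g) : I ⊗[A] (Ω[A⁄ZMod p]))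
          ∈ Submodule.span (ZMod p) (Set.range v) →
        (gt ⊗ₜ[A] D (MonoidAlgebra.of (ZMod p) (PGroup p r n) (g ^ k)) : I ⊗[A] (Ω[A⁄ZMod p]))
          ∈ Submodule.span (ZMod p) (Set.range v) := by
      intro g k hg
      induction k with
      | zero => rw [pow_zero]; exact h1
      | succ k ih => rw [pow_succ]; exact hmul _ _ ih hg
    intro g
    rw [pGroup_eq_prod g]
    refine Finset.prod_induction _ _ hmul h1 ?_
    intro i _
    exact hpow _ _ (Submodule.subset_span ⟨i, rfl⟩)
  have hω : ∀ ω : Ω[A⁄ZMod p],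
      (gt ⊗ₜ[A] ω : I ⊗[A] (Ω[A⁄ZMod p])) ∈ Submodule.span (ZMod p) (Set.range v) := by
    intro ω
    have hω' : ω ∈ Submodule.span A (Set.range (KaehlerDifferential.D (ZMod p) A)) := by
      rw [KaehlerDifferential.span_range_derivation]; trivial
    induction hω' using Submodule.span_induction with
    | mem x hx =>
        obtain ⟨a, rfl⟩ := hx
        induction a using MonoidAlgebra.induction_linear with
        | zero => rw [map_zero, TensorProduct.tmul_zero]; exact Submodule.zero_mem _
        | add f g hf hg =>
            rw [map_add, TensorProduct.tmul_add]
            exact Submodule.add_mem _ hf hg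
        | single g c =>
            rw [single_eq_smul_of,
              Derivation.map_smul, TensorProduct.tmul_smul]
            exact Submodule.smul_mem _ _ (hgen g)
    | zero => rw [TensorProduct.tmul_zero]; exact Submodule.zero_mem _
    | add x y _ _ ihx ihy =>
        rw [TensorProduct.tmul_add]
        exact Submodule.add_mem _ ihx ihy
    | smul a x _ ih =>
        rw [← TensorProduct.smul_tmul,
          show a • gt = eps a • gt from Subtype.ext (by
            change a * gTilde p r n = _
            rw [mul_gTilde]; rfl),
          ← TensorProduct.smul_tmul']
        exact Submodule.smul_mem _ _ ih
  have hspan : ∀ x : I ⊗[A] (Ω[A⁄ZMod p]), x ∈ Submodule.span (ZMod p) (Set.range v) := by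
    intro x
    induction x using TensorProduct.induction_on with
    | zero => exact Submodule.zero_mem _
    | tmul y ω =>
        obtain ⟨a, ha⟩ := Ideal.mem_span_singleton'.mp y.2
        have hy : y = a • gt := Subtype.ext ha.symm
        rw [hy, TensorProduct.smul_tmul]
        exact hω _
    | add x y hx hy => exact Submodule.add_mem _ hx hy
  have hΨΦ : Ψ.comp Φ = LinearMap.id := by
    apply LinearMap.ext
    intro x
    simp only [LinearMap.id_apply, LinearMap.comp_apply]
    induction hspan x using Submodule.span_induction with
    | mem y hy => obtain ⟨j, rfl⟩ := hy; rw [hΦv, hΨsingle]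
    | zero => rw [map_zero, map_zero]
    | add x y _ _ ihx ihy => rw [map_add, map_add, ihx, ihy]
    | smul c x _ ih => rw [map_smul, map_smul, ih]
  have hΦΨ : Φ.comp Ψ = LinearMap.id := by
    apply (Pi.basisFun (ZMod p) (Fin r)).ext
    intro j
    rw [LinearMap.comp_apply, Pi.basisFun_apply, hΨsingle, hΦv, LinearMap.id_apply]
  refine ⟨(Pi.basisFun (ZMod p) (Fin r)).map (LinearEquiv.ofLinear Ψ Φ hΨΦ hΦΨ), ?_⟩
  intro i
  rw [Module.Basis.map_apply, LinearEquiv.ofLinear_apply, Pi.basisFun_apply, hΨsingle]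

end main

/-- With `(G̃)` the ideal of `F_p[G]` generated by `G̃ = ∑_{g ∈ G} g`, the tensor product
`(G̃) ⊗_{F_p[G]} Ω_{F_p[G]/F_p}` is an `F_p`-vector space of dimension `r`, with basis
given by the elements `G̃ ⊗ dg_i` for `1 ≤ i ≤ r`. -/
theorem gTilde_tensor_kaehler_basis (p : ℕ) [Fact p.Prime] (r : ℕ) (n : Fin r → ℕ)
    (hn : ∀ i, 1 ≤ n i) :
    ∃ b : Module.Basis (Fin r) (ZMod p)
        ((Ideal.span {gTilde p r n} : Ideal (MonoidAlgebra (ZMod p) (PGroup p r n)))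
          ⊗[MonoidAlgebra (ZMod p) (PGroup p r n)]
            (Ω[MonoidAlgebra (ZMod p) (PGroup p r n)⁄ZMod p])),
      ∀ i : Fin r,
        b i = (⟨gTilde p r n, Ideal.subset_span rfl⟩ :
            (Ideal.span {gTilde p r n} : Ideal (MonoidAlgebra (ZMod p) (PGroup p r n)))) ⊗ₜ
          KaehlerDifferential.D (ZMod p) (MonoidAlgebra (ZMod p) (PGroup p r n))
            (MonoidAlgebra.of (ZMod p) (PGroup p r n) (pGen p r n i)) :=
  gTilde_tensor_kaehler_basis' p r n hn
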